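/- Let N be an even positive integer and p an integer with 2 ≤ p ≤ N/2; assume u^p[2n]² + v^p[2n]² > 0 for every n. Then the N signals {ψ_{[1],0}^p[·−2l] : 0 ≤ l < N/2} ∪ {ψ_{[1],1}^p[·−2l] : 0 ≤ l < N/2} form an orthonormal basis of Π[N]; that is, ⟨ψ_{[1],λ}^p[·−2l], ψ_{[1],μ}^p[·−2m]⟩ = 1 if λ = μ and l = m, and = 0 otherwise, for λ,μ ∈ {0,1} and 0 ≤ l,m < N/2. -/

import Mathlib

open MeasureTheory

namespace WP

/-- The root of unity ω = e^{2πi/N}. -/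
noncomputable def ww (N : ℕ) : ℂ := Complex.exp (2 * Real.pi * Complex.I / N)

/-- DFT of a signal `x ∈ Π[N]`: x̂[n] = Σ_{k=0}^{N−1} ω^{−kn} x[k]. -/
noncomputable def dft (N : ℕ) (x : ℤ → ℂ) (n : ℤ) : ℂ :=
  ∑ k ∈ Finset.range N, ww N ^ (-((k : ℤ) * n)) * x k

/-- Inner product on `Π[N]`. -/
noncomputable def inner1 (N : ℕ) (x y : ℤ → ℂ) : ℂ :=
  ∑ k ∈ Finset.range N, x k * (starRingEnd ℂ) (y k)

/-- The discrete periodic Hilbert transform, defined via the DFT: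
    Ĥ(x)[n] = −i·x̂[n] for 0<n<N/2, i·x̂[n] for N/2<n<N, 0 at n=0 and n=N/2. -/
noncomputable def hilbertT (N : ℕ) (x : ℤ → ℂ) (k : ℤ) : ℂ :=
  (N : ℂ)⁻¹ * ∑ n ∈ Finset.range N,
    (if 0 < n ∧ n < N / 2 then -Complex.I else if N / 2 < n ∧ n < N then Complex.I else 0) *
      dft N x n * ww N ^ ((k * (n : ℤ)))

/-- The complementary-WP operator `C`, defined via the DFT:
    Ĉ(x)[n] = −i·x̂[n] for 0<n<N/2, i·x̂[n] for N/2<n<N, x̂[0] at 0, x̂[N/2] at N/2. -/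
noncomputable def cwpT (N : ℕ) (x : ℤ → ℂ) (k : ℤ) : ℂ :=
  (N : ℂ)⁻¹ * ∑ n ∈ Finset.range N,
    (if n = 0 ∨ n = N / 2 then 1 else if n < N / 2 then -Complex.I else Complex.I) *
      dft N x n * ww N ^ ((k * (n : ℤ)))

/-- The order-p B-spline b^p(t). -/
noncomputable def bspline (p : ℕ) (t : ℝ) : ℝ :=
  (1 / (Nat.factorial (p - 1) : ℝ)) *
    ∑ k ∈ Finset.range (p + 1),
      (-1 : ℝ) ^ k * (p.choose k : ℝ) * max (t + (p : ℝ) / 2 - (k : ℝ)) 0 ^ (p - 1)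

/-- u^p[n] = Σ_{k=−N/2}^{N/2−1} ω^{−kn} b^p(k). -/
noncomputable def uSeq (N p : ℕ) (n : ℤ) : ℂ :=
  ∑ k ∈ Finset.range N,
    ww N ^ (-(((k : ℤ) - (N : ℤ) / 2) * n)) * (bspline p ((k : ℝ) - (N : ℝ) / 2) : ℂ)

/-- v^p[n] = e^{−πin/N} Σ_{k=−N/2}^{N/2−1} ω^{−kn} b^p(k+1/2). -/
noncomputable def vSeq (N p : ℕ) (n : ℤ) : ℂ :=
  Complex.exp (-Real.pi * Complex.I * n / N) *
    ∑ k ∈ Finset.range N,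
      ww N ^ (-(((k : ℤ) - (N : ℤ) / 2) * n)) *
        (bspline p ((k : ℝ) - (N : ℝ) / 2 + 1 / 2) : ℂ)

/-- The span-two discrete-time B-spline b_{[1]}^p ∈ Π[N]:
    the N-periodic signal with b_{[1]}^p[k] = b^p(k/2)/2 for −N/2 ≤ k ≤ N/2−1. -/
noncomputable def bs1 (N p : ℕ) (k : ℤ) : ℂ :=
  ((bspline p ((((k + (N : ℤ) / 2) % (N : ℤ) - (N : ℤ) / 2 : ℤ) : ℝ) / 2) : ℝ) : ℂ) / 2

/-- Its DFT b̂_{[1]}^p[n] = Σ_{k=−N/2}^{N/2−1} ω^{−kn} b_{[1]}^p[k]. -/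
noncomputable def bhat1 (N p : ℕ) (n : ℤ) : ℂ :=
  ∑ k ∈ Finset.range N,
    ww N ^ (-(((k : ℤ) - (N : ℤ) / 2) * n)) * bs1 N p ((k : ℤ) - (N : ℤ) / 2)

/-- Υ^p[n] = (u^p[2n]² + v^p[2n]²)/4. -/
noncomputable def upsilon (N p : ℕ) (n : ℤ) : ℂ :=
  (uSeq N p (2 * n) ^ 2 + vSeq N p (2 * n) ^ 2) / 4

/-- β[n] = b̂_{[1]}^p[n] / √(Υ^p[n]). -/
noncomputable def betaS (N p : ℕ) (n : ℤ) : ℂ := bhat1 N p n / upsilon N p n ^ ((1 : ℂ) / 2)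

/-- α[n] = ω^n · β[n+N/2]. -/
noncomputable def alphaS (N p : ℕ) (n : ℤ) : ℂ := ww N ^ n * betaS N p (n + (N : ℤ) / 2)

/-- The first-level wavelet packets ψ_{[1],λ}^p, λ = 0,1, defined via their DFTs
    ψ̂_{[1],0}^p[n] = β[n] and ψ̂_{[1],1}^p[n] = α[n]. -/
noncomputable def psi1 (N p lam : ℕ) (k : ℤ) : ℂ :=
  (N : ℂ)⁻¹ * ∑ n ∈ Finset.range N,
    (if lam = 0 then betaS N p n else alphaS N p n) * ww N ^ ((k * (n : ℤ)))


-- ===== auxiliary development =====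
open Finset fwdDiff in
lemma fwdDiff_iter_pow_eq_zero : ∀ (m : ℕ), ∀ p, m < p → ∀ c : ℝ,
    (fwdDiff (1:ℝ))^[p] (fun x : ℝ => (c + x) ^ m) = 0 := by
  intro m
  induction m using Nat.strong_induction_on with
  | _ m IH =>
    intro p hmp c
    obtain ⟨q, rfl⟩ : ∃ q, p = q + 1 := ⟨p - 1, by omega⟩
    rw [Function.iterate_succ_apply]
    have hd : fwdDiff (1:ℝ) (fun x : ℝ => (c + x) ^ m)
        = ∑ j ∈ range m, fun x : ℝ => (m.choose j : ℝ) * (c + x) ^ j := by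
      funext x
      simp only [fwdDiff, Finset.sum_apply]
      have h1 : (c + (x + 1)) = (c + x) + 1 := by ring
      rw [h1, add_pow, Finset.sum_range_succ]
      simp only [one_pow, mul_one, Nat.choose_self, Nat.cast_one, Nat.sub_self, pow_zero]
      rw [add_sub_cancel_right]
      exact Finset.sum_congr rfl (fun j _ => by ring)
    rw [hd, fwdDiff_iter_finset_sum]
    funext x
    simp only [Finset.sum_apply, Pi.zero_apply]
    refine Finset.sum_eq_zero fun j hj => ?_
    have hjm : j < m := Finset.mem_range.mp hj
    have : (fun x : ℝ => (m.choose j : ℝ) * (c + x) ^ j)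
        = (m.choose j : ℝ) • fun x : ℝ => (c + x) ^ j := by
      funext y; simp [smul_eq_mul]
    rw [this, fwdDiff_iter_const_smul, IH j hjm q (by omega) c]
    simp

open Finset in
lemma alt_sum_pow (p m : ℕ) (hm : m < p) (c : ℝ) :
    ∑ k ∈ range (p + 1), (-1 : ℝ) ^ k * (p.choose k : ℝ) * (c - (k : ℝ)) ^ m = 0 := by
  have key := fwdDiff_iter_eq_sum_shift (1:ℝ) (fun x : ℝ => (-c + x) ^ m) p 0
  rw [congrFun (fwdDiff_iter_pow_eq_zero m p hm (-c)) 0] at key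
  simp only [zsmul_eq_mul, Int.cast_mul, Int.cast_pow, Int.cast_neg, Int.cast_one,
    Int.cast_natCast, nsmul_eq_mul, mul_one, zero_add] at key
  have hterm : ∀ k ∈ range (p + 1),
      (-1 : ℝ) ^ k * (p.choose k : ℝ) * (c - (k : ℝ)) ^ m
        = (-1 : ℝ) ^ (p + m) * ((-1 : ℝ) ^ (p - k) * (p.choose k : ℝ) * (-c + (k : ℝ)) ^ m) := by
    intro k hk
    have hk' : k ≤ p := Nat.lt_succ_iff.mp (mem_range.mp hk)
    have e1 : (-1 : ℝ) ^ (p - k) * (-1 : ℝ) ^ k = (-1 : ℝ) ^ p := by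
      rw [← pow_add]; congr 1; omega
    have ha : (-1 : ℝ) ^ (p - k) * (-1 : ℝ) ^ (p - k) = 1 := by
      rw [← pow_add, ← two_mul, pow_mul]; norm_num
    have hd : (-1 : ℝ) ^ m * (-1 : ℝ) ^ m = 1 := by
      rw [← pow_add, ← two_mul, pow_mul]; norm_num
    have e3 : (-c + (k : ℝ)) ^ m = (-1 : ℝ) ^ m * (c - (k : ℝ)) ^ m := by
      rw [show (-c + (k : ℝ)) = -(c - (k : ℝ)) by ring, neg_pow]
    rw [e3, pow_add, ← e1]
    linear_combination
      (-((-1:ℝ)^m * (-1:ℝ)^m * (-1:ℝ)^k * (p.choose k : ℝ) * (c - (k:ℝ))^m)) * ha +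
      (-((-1:ℝ)^k * (p.choose k : ℝ) * (c - (k:ℝ))^m)) * hd
  rw [Finset.sum_congr rfl hterm, ← Finset.mul_sum, ← key]; simp

lemma bspline_zero_of_le (p : ℕ) (hp : 2 ≤ p) (t : ℝ) (ht : t ≤ -((p : ℝ) / 2)) :
    bspline p t = 0 := by
  unfold bspline
  rw [Finset.sum_eq_zero, mul_zero]
  intro k hk
  have h1 : t + (p : ℝ) / 2 - (k : ℝ) ≤ 0 := by
    have : (0:ℝ) ≤ (k:ℝ) := Nat.cast_nonneg k
    linarith
  rw [max_eq_right h1, zero_pow (by omega)]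
  ring

open Finset in
lemma bspline_symm (p : ℕ) (hp : 2 ≤ p) (t : ℝ) : bspline p (-t) = bspline p t := by
  unfold bspline
  congr 1
  set m := p - 1 with hm
  have hm1 : 1 ≤ m := by omega
  have hmp : m + 1 = p := by omega
  have maxpow : ∀ x : ℝ, max x 0 ^ m = x ^ m + (-1:ℝ)^(m+1) * max (-x) 0 ^ m := by
    intro x
    rcases le_or_gt 0 x with hx | hx
    · rw [max_eq_left hx, max_eq_right (by linarith), zero_pow (by omega), mul_zero, add_zero]
    · rw [max_eq_right hx.le, max_eq_left (by linarith), zero_pow (by omega)]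
      rw [neg_pow x m, pow_succ]
      have hsq : (-1:ℝ)^m * (-1:ℝ)^m = 1 := by rw [← pow_add, ← two_mul, pow_mul]; norm_num
      linear_combination (x^m) * hsq
  conv_lhs => rw [← Finset.sum_range_reflect]
  have hrhs : ∑ k ∈ range (p+1), (-1:ℝ)^k * (p.choose k : ℝ) * max (t + (p:ℝ)/2 - (k:ℝ)) 0 ^ m
      = ∑ k ∈ range (p+1), (-1:ℝ)^k * (p.choose k : ℝ) *
          ((t + (p:ℝ)/2 - (k:ℝ)) ^ m + (-1:ℝ)^(m+1) * max (-(t + (p:ℝ)/2 - (k:ℝ))) 0 ^ m) :=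
    Finset.sum_congr rfl fun k _ => by rw [maxpow]
  rw [hrhs]
  have hsplit : ∑ k ∈ range (p+1), (-1:ℝ)^k * (p.choose k : ℝ) *
          ((t + (p:ℝ)/2 - (k:ℝ)) ^ m + (-1:ℝ)^(m+1) * max (-(t + (p:ℝ)/2 - (k:ℝ))) 0 ^ m)
      = (∑ k ∈ range (p+1), (-1:ℝ)^k * (p.choose k : ℝ) * ((t + (p:ℝ)/2) - (k:ℝ)) ^ m)
        + ∑ k ∈ range (p+1), (-1:ℝ)^k * (p.choose k : ℝ) *
            ((-1:ℝ)^(m+1) * max (-(t + (p:ℝ)/2 - (k:ℝ))) 0 ^ m) := by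
    rw [← Finset.sum_add_distrib]
    exact Finset.sum_congr rfl fun k _ => by ring
  rw [hsplit, alt_sum_pow p m (by omega) (t + (p:ℝ)/2), zero_add]
  apply Finset.sum_congr rfl
  intro j hj
  have hjp : j ≤ p := Nat.lt_succ_iff.mp (mem_range.mp hj)
  have h1 : p + 1 - 1 - j = p - j := by omega
  rw [h1, Nat.choose_symm hjp]
  have hcast : ((p - j : ℕ) : ℝ) = (p : ℝ) - (j : ℝ) := by
    push_cast [Nat.cast_sub hjp]; ring
  have harg : -t + (p:ℝ)/2 - ((p - j : ℕ) : ℝ) = -(t + (p:ℝ)/2 - (j:ℝ)) := by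
    rw [hcast]; ring
  rw [harg]
  have hjsq : (-1:ℝ)^j * (-1:ℝ)^j = 1 := by
    rw [← pow_add, ← two_mul, pow_mul]; norm_num
  have hpd : (-1:ℝ)^(p-j) * (-1:ℝ)^j = (-1:ℝ)^p := by
    rw [← pow_add]; congr 1; omega
  have e : (-1:ℝ)^(p-j) = (-1:ℝ)^(m+1) * (-1:ℝ)^j := by
    rw [hmp]
    calc (-1:ℝ)^(p-j) = (-1:ℝ)^(p-j) * ((-1:ℝ)^j * (-1:ℝ)^j) := by rw [hjsq, mul_one]
    _ = ((-1:ℝ)^(p-j) * (-1:ℝ)^j) * (-1:ℝ)^j := by ring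
    _ = (-1:ℝ)^p * (-1:ℝ)^j := by rw [hpd]
  rw [e]; ring

lemma bspline_zero_of_abs (p : ℕ) (hp : 2 ≤ p) (t : ℝ) (ht : (p : ℝ) / 2 ≤ |t|) :
    bspline p t = 0 := by
  rcases abs_cases t with ⟨h1, h2⟩ | ⟨h1, h2⟩
  · rw [← bspline_symm p hp t]
    exact bspline_zero_of_le p hp (-t) (by rw [h1] at ht; linarith)
  · exact bspline_zero_of_le p hp t (by rw [h1] at ht; linarith)

lemma ww_ne_zero (N : ℕ) : ww N ≠ 0 := Complex.exp_ne_zero _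

lemma ww_zpow (N : ℕ) (z : ℤ) : ww N ^ z = Complex.exp (2 * Real.pi * Complex.I * z / N) := by
  rw [ww, ← Complex.exp_int_mul]
  congr 1
  ring

lemma ww_zpow_add (N : ℕ) (a b : ℤ) : ww N ^ (a + b) = ww N ^ a * ww N ^ b :=
  zpow_add₀ (ww_ne_zero N) a b

lemma conj_ww_zpow (N : ℕ) (z : ℤ) :
    (starRingEnd ℂ) (ww N ^ z) = ww N ^ (-z) := by
  rw [ww_zpow, ww_zpow, ← Complex.exp_conj]
  congr 1
  have h : (starRingEnd ℂ) (2 * (Real.pi:ℂ) * Complex.I * z / N)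
      = 2 * (Real.pi:ℂ) * (-Complex.I) * z / N := by
    rw [map_div₀, map_mul, map_mul, map_mul]
    simp only [Complex.conj_I, Complex.conj_ofReal, map_ofNat, map_intCast, map_natCast]
  rw [h]
  push_cast
  ring

lemma ww_zpow_eq_one_iff (N : ℕ) (hN : 0 < N) (z : ℤ) :
    ww N ^ z = 1 ↔ (N : ℤ) ∣ z := by
  rw [ww_zpow, Complex.exp_eq_one_iff]
  constructor
  · rintro ⟨n, hn⟩
    refine ⟨n, ?_⟩
    have hNne : (N : ℂ) ≠ 0 := Nat.cast_ne_zero.mpr hN.ne'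
    have hpi : (2 * (Real.pi:ℂ) * Complex.I) ≠ 0 := by
      simp [Real.pi_ne_zero, Complex.I_ne_zero]
    field_simp at hn
    have : (z : ℂ) = (N : ℂ) * (n : ℂ) := by
      apply mul_right_cancel₀ hpi
      linear_combination (2 * (Real.pi:ℂ) * Complex.I) * hn
    exact_mod_cast this
  · rintro ⟨n, rfl⟩
    refine ⟨n, ?_⟩
    have hNne : (N : ℂ) ≠ 0 := Nat.cast_ne_zero.mpr hN.ne'
    field_simp
    push_cast
    ring

open Finset in
lemma sum_ww (N : ℕ) (hN : 0 < N) (d : ℤ) :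
    ∑ k ∈ range N, ww N ^ ((k : ℤ) * d) = if (N : ℤ) ∣ d then (N : ℂ) else 0 := by
  have hrw : ∀ k : ℕ, ww N ^ ((k : ℤ) * d) = (ww N ^ d) ^ k := by
    intro k
    rw [mul_comm, zpow_mul]
    norm_cast
  rw [Finset.sum_congr rfl fun k _ => hrw k]
  by_cases h : (N : ℤ) ∣ d
  · rw [if_pos h, (ww_zpow_eq_one_iff N hN d).mpr h]
    simp
  · rw [if_neg h]
    have hne : ww N ^ d ≠ 1 := fun hc => h ((ww_zpow_eq_one_iff N hN d).mp hc)
    have hgeom := geom_sum_eq hne N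
    rw [hgeom]
    have hNpow : (ww N ^ d) ^ N = 1 := by
      rw [← zpow_natCast (ww N ^ d) N, ← zpow_mul, mul_comm, zpow_mul,
        (ww_zpow_eq_one_iff N hN N).mpr ⟨1, by ring⟩, one_zpow]
    rw [hNpow, sub_self, zero_div]

open Finset in
lemma dft_orth (N : ℕ) (hN : 0 < N) (n m : ℕ) (hn : n < N) (hm : m < N) :
    ∑ k ∈ range N, ww N ^ ((k:ℤ) * ((n:ℤ) - (m:ℤ))) = if n = m then (N:ℂ) else 0 := by
  rw [sum_ww N hN]
  by_cases h : n = m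
  · subst h; simp
  · rw [if_neg h, if_neg]
    intro hdvd
    have h1 : ((n:ℤ) - (m:ℤ)) = 0 := by
      rcases hdvd with ⟨c, hc⟩
      have : c = 0 := by
        rcases lt_trichotomy c 0 with hc' | hc' | hc'
        · nlinarith [hc ▸ (by omega : -(N:ℤ) < (n:ℤ) - (m:ℤ))]
        · exact hc'
        · nlinarith [hc ▸ (by omega : (n:ℤ) - (m:ℤ) < (N:ℤ))]
      rw [hc, this, mul_zero]
    exact h (by omega)

open Finset in
lemma inner_inv (N : ℕ) (hN : 0 < N) (c c' : ℤ → ℂ) (a b : ℤ) :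
    inner1 N (fun k => (N:ℂ)⁻¹ * ∑ n ∈ range N, c n * ww N ^ ((k - a) * (n:ℤ)))
            (fun k => (N:ℂ)⁻¹ * ∑ n ∈ range N, c' n * ww N ^ ((k - b) * (n:ℤ)))
    = (N:ℂ)⁻¹ * ∑ n ∈ range N, c n * (starRingEnd ℂ) (c' n) * ww N ^ ((b - a) * (n:ℤ)) := by
  have hNC : (N:ℂ) ≠ 0 := Nat.cast_ne_zero.mpr hN.ne'
  rw [inner1]
  have step1 : ∀ k ∈ range N,
      ((N:ℂ)⁻¹ * ∑ n ∈ range N, c n * ww N ^ (((k:ℤ) - a) * (n:ℤ))) *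
        (starRingEnd ℂ) ((N:ℂ)⁻¹ * ∑ n ∈ range N, c' n * ww N ^ (((k:ℤ) - b) * (n:ℤ)))
      = (N:ℂ)⁻¹ * (N:ℂ)⁻¹ * ∑ n ∈ range N, ∑ m ∈ range N,
          (c n * (starRingEnd ℂ) (c' m) * ww N ^ (b * (m:ℤ) - a * (n:ℤ)))
            * ww N ^ ((k:ℤ) * ((n:ℤ) - (m:ℤ))) := by
    intro k _
    rw [map_mul, map_sum, map_inv₀, Complex.conj_natCast]
    rw [mul_mul_mul_comm, Finset.sum_mul_sum]
    congr 1
    refine Finset.sum_congr rfl fun n _ => Finset.sum_congr rfl fun m _ => ?_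
    rw [map_mul, conj_ww_zpow, mul_mul_mul_comm, ← ww_zpow_add]
    rw [show ((k:ℤ) - a) * (n:ℤ) + -(((k:ℤ) - b) * (m:ℤ))
        = (b * (m:ℤ) - a * (n:ℤ)) + (k:ℤ) * ((n:ℤ) - (m:ℤ)) by ring]
    rw [ww_zpow_add]
    ring
  rw [Finset.sum_congr rfl step1, ← Finset.mul_sum, Finset.sum_comm]
  have step2 : ∀ n ∈ range N,
      (∑ k ∈ range N, ∑ m ∈ range N,
        (c n * (starRingEnd ℂ) (c' m) * ww N ^ (b * (m:ℤ) - a * (n:ℤ)))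
          * ww N ^ ((k:ℤ) * ((n:ℤ) - (m:ℤ))))
      = (N:ℂ) * (c n * (starRingEnd ℂ) (c' n) * ww N ^ ((b - a) * (n:ℤ))) := by
    intro n hn
    rw [Finset.sum_comm]
    have hinner : ∀ m ∈ range N,
        (∑ k ∈ range N,
          (c n * (starRingEnd ℂ) (c' m) * ww N ^ (b * (m:ℤ) - a * (n:ℤ)))
            * ww N ^ ((k:ℤ) * ((n:ℤ) - (m:ℤ))))
        = if n = m then
            (c n * (starRingEnd ℂ) (c' m) * ww N ^ (b * (m:ℤ) - a * (n:ℤ))) * N else 0 := by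
      intro m hm
      rw [← Finset.mul_sum, dft_orth N hN n m (mem_range.mp hn) (mem_range.mp hm)]
      by_cases h : n = m
      · rw [if_pos h, if_pos h]
      · rw [if_neg h, if_neg h, mul_zero]
    rw [Finset.sum_congr rfl hinner, Finset.sum_ite_eq, if_pos hn]
    rw [show (b - a) * (n:ℤ) = b * (n:ℤ) - a * (n:ℤ) by ring]
    ring
  rw [Finset.sum_congr rfl step2, ← Finset.mul_sum]
  field_simp

/-- Centered "even-sample" sum. -/
noncomputable def SA (N p : ℕ) (n : ℤ) : ℂ :=
  ∑ j ∈ Finset.Icc (-(((p - 1) / 2 : ℕ) : ℤ)) (((p - 1) / 2 : ℕ) : ℤ),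
    ww N ^ (-(2 * j * n)) * ((bspline p (j : ℝ) : ℝ) : ℂ)

/-- Centered "odd-sample" sum. -/
noncomputable def SB (N p : ℕ) (n : ℤ) : ℂ :=
  ∑ j ∈ Finset.Icc (-((p / 2 : ℕ) : ℤ)) ((((p / 2 : ℕ) : ℤ)) - 1),
    ww N ^ (-((2 * j + 1) * n)) * ((bspline p ((j : ℝ) + 1 / 2) : ℝ) : ℂ)

open Finset in
lemma uSeq_eq_SA (N p M : ℕ) (hNM : N = 2 * M) (hp : 2 ≤ p) (hpM : p ≤ M) (n : ℤ) :
    uSeq N p (2 * n) = SA N p n := by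
  have hNZ : (N : ℤ) = 2 * (M : ℤ) := by exact_mod_cast hNM
  have hNR : (N : ℝ) = 2 * (M : ℝ) := by exact_mod_cast hNM
  rw [uSeq, SA]
  refine (Finset.sum_of_injOn (fun j => (j + (M : ℤ)).toNat) ?_ ?_ ?_ ?_).symm
  · intro x hx y hy hxy
    simp only [Finset.coe_Icc, Set.mem_Icc] at hx hy
    simp only at hxy
    omega
  · intro j hj
    simp only [Finset.coe_Icc, Set.mem_Icc] at hj
    simp only [Finset.coe_range, Set.mem_Iio]
    omega
  · intro k hk hkim
    have hkN : k < N := Finset.mem_range.mp hk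
    have hout : ¬ (-(((p - 1) / 2 : ℕ) : ℤ) ≤ (k : ℤ) - (M : ℤ) ∧
        (k : ℤ) - (M : ℤ) ≤ (((p - 1) / 2 : ℕ) : ℤ)) := by
      rintro ⟨h1, h2⟩
      exact hkim ⟨(k : ℤ) - (M : ℤ), Finset.mem_coe.mpr (Finset.mem_Icc.mpr ⟨h1, h2⟩),
        by show ((k : ℤ) - ↑M + ↑M).toNat = k; omega⟩
    have habs : (((p - 1) / 2 : ℕ) : ℤ) + 1 ≤ |(k : ℤ) - (M : ℤ)| := by
      rcases not_and_or.mp hout with h | h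
      · push_neg at h
        rw [abs_of_nonpos (by omega)]
        omega
      · push_neg at h
        rw [abs_of_nonneg (by omega)]
        omega
    have hb : bspline p ((k : ℝ) - (N : ℝ) / 2) = 0 := by
      apply bspline_zero_of_abs p hp
      have h1 : ((k : ℝ) - (N : ℝ) / 2) = (((k : ℤ) - (M : ℤ) : ℤ) : ℝ) := by
        push_cast [hNR]; ring
      have hfin : (p : ℤ) ≤ 2 * |(k : ℤ) - (M : ℤ)| := by
        have h3 : (p : ℤ) ≤ 2 * ((((p - 1) / 2 : ℕ) : ℤ) + 1) := by omega
        linarith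
      have hfinR : (p : ℝ) ≤ 2 * ((|(k : ℤ) - (M : ℤ)| : ℤ) : ℝ) := by exact_mod_cast hfin
      rw [h1, ← Int.cast_abs]
      linarith
    rw [hb]
    simp
  · intro j hj
    simp only [Finset.mem_Icc] at hj
    have hjM : (((j + (M : ℤ)).toNat : ℕ) : ℤ) = j + (M : ℤ) := Int.toNat_of_nonneg (by omega)
    have hargR : (((j + (M : ℤ)).toNat : ℕ) : ℝ) - (N : ℝ) / 2 = (j : ℝ) := by
      have h5 : (((j + (M : ℤ)).toNat : ℕ) : ℝ) = (j : ℝ) + (M : ℝ) := by exact_mod_cast hjM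
      rw [h5, hNR]; ring
    have hexp : -((((((j + (M : ℤ)).toNat : ℕ) : ℤ)) - (N : ℤ) / 2) * (2 * n)) = -(2 * j * n) := by
      rw [hjM, show (N : ℤ) / 2 = (M : ℤ) by omega]; ring
    rw [hexp, hargR]

open Finset in
lemma vSeq_eq_SB (N p M : ℕ) (hNM : N = 2 * M) (hp : 2 ≤ p) (hpM : p ≤ M) (n : ℤ) :
    vSeq N p (2 * n) = SB N p n := by
  have hNZ : (N : ℤ) = 2 * (M : ℤ) := by exact_mod_cast hNM
  have hNR : (N : ℝ) = 2 * (M : ℝ) := by exact_mod_cast hNM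
  rw [vSeq]
  have hphase : Complex.exp (-(Real.pi : ℂ) * Complex.I * ((2 * n : ℤ) : ℂ) / (N : ℂ))
      = ww N ^ (-n) := by
    rw [ww_zpow]
    congr 1
    push_cast
    ring
  rw [hphase, Finset.mul_sum, SB]
  refine (Finset.sum_of_injOn (fun j => (j + (M : ℤ)).toNat) ?_ ?_ ?_ ?_).symm
  · intro x hx y hy hxy
    simp only [Finset.coe_Icc, Set.mem_Icc] at hx hy
    simp only at hxy
    omega
  · intro j hj
    simp only [Finset.coe_Icc, Set.mem_Icc] at hj
    simp only [Finset.coe_range, Set.mem_Iio]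
    omega
  · intro k hk hkim
    have hkN : k < N := Finset.mem_range.mp hk
    have hout : ¬ (-((p / 2 : ℕ) : ℤ) ≤ (k : ℤ) - (M : ℤ) ∧
        (k : ℤ) - (M : ℤ) ≤ ((p / 2 : ℕ) : ℤ) - 1) := by
      rintro ⟨h1, h2⟩
      exact hkim ⟨(k : ℤ) - (M : ℤ), Finset.mem_coe.mpr (Finset.mem_Icc.mpr ⟨h1, h2⟩),
        by show ((k : ℤ) - ↑M + ↑M).toNat = k; omega⟩
    have hb : bspline p ((k : ℝ) - (N : ℝ) / 2 + 1 / 2) = 0 := by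
      apply bspline_zero_of_abs p hp
      have hr : (p : ℝ) ≤ 2 * ((p / 2 : ℕ) : ℝ) + 1 := by
        have h3 : p ≤ 2 * (p / 2) + 1 := by omega
        exact_mod_cast (by exact_mod_cast h3 : (p : ℝ) ≤ ((2 * (p / 2) + 1 : ℕ) : ℝ))
      rcases not_and_or.mp hout with h | h
      · push_neg at h
        have h6 : k + p / 2 + 1 ≤ M := by omega
        have h5 : (k : ℝ) + ((p / 2 : ℕ) : ℝ) + 1 ≤ (M : ℝ) := by exact_mod_cast h6
        refine le_abs.mpr (Or.inr ?_)
        rw [hNR]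
        linarith
      · push_neg at h
        have h6 : M + p / 2 ≤ k := by omega
        have h5 : (M : ℝ) + ((p / 2 : ℕ) : ℝ) ≤ (k : ℝ) := by exact_mod_cast h6
        refine le_abs.mpr (Or.inl ?_)
        rw [hNR]
        linarith
    rw [hb]
    simp
  · intro j hj
    simp only [Finset.mem_Icc] at hj
    have hjM : (((j + (M : ℤ)).toNat : ℕ) : ℤ) = j + (M : ℤ) := Int.toNat_of_nonneg (by omega)
    have hargR : (((j + (M : ℤ)).toNat : ℕ) : ℝ) - (N : ℝ) / 2 + 1 / 2 = (j : ℝ) + 1 / 2 := by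
      have h5 : (((j + (M : ℤ)).toNat : ℕ) : ℝ) = (j : ℝ) + (M : ℝ) := by exact_mod_cast hjM
      rw [h5, hNR]; ring
    have hexp : -n + -((((((j + (M : ℤ)).toNat : ℕ) : ℤ)) - (N : ℤ) / 2) * (2 * n))
        = -((2 * j + 1) * n) := by
      rw [hjM, show (N : ℤ) / 2 = (M : ℤ) by omega]; ring
    rw [hargR, ← hexp, ww_zpow_add, mul_assoc]

open Finset in
lemma bhat1_eq_SASB (N p M : ℕ) (hNM : N = 2 * M) (hp : 2 ≤ p) (hpM : p ≤ M) (n : ℤ) :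
    bhat1 N p n = (SA N p n + SB N p n) / 2 := by
  have hNZ : (N : ℤ) = 2 * (M : ℤ) := by exact_mod_cast hNM
  have hterm : ∀ k ∈ range N,
      ww N ^ (-(((k : ℤ) - (N : ℤ) / 2) * n)) * bs1 N p ((k : ℤ) - (N : ℤ) / 2)
      = ww N ^ (-(((k : ℤ) - (M : ℤ)) * n)) *
          ((((bspline p (((((k : ℤ) - (M : ℤ) : ℤ)) : ℝ) / 2)) : ℝ) : ℂ) / 2) := by
    intro k hk
    have hkN : k < N := mem_range.mp hk
    have hN2 : (N : ℤ) / 2 = (M : ℤ) := by omega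
    rw [bs1, hN2]
    have hmod : ((k : ℤ) - (M : ℤ) + (M : ℤ)) % (N : ℤ) = (k : ℤ) - (M : ℤ) + (M : ℤ) :=
      Int.emod_eq_of_lt (by omega) (by omega)
    rw [hmod, show ((k : ℤ) - (M : ℤ) + (M : ℤ) - (M : ℤ)) = (k : ℤ) - (M : ℤ) by ring]
  rw [bhat1, Finset.sum_congr rfl hterm,
    ← Finset.sum_filter_add_sum_filter_not (range N) (fun k => (k + M) % 2 = 0)]
  have hSA : ∑ k ∈ (range N).filter (fun k => (k + M) % 2 = 0),
      ww N ^ (-(((k : ℤ) - (M : ℤ)) * n)) *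
        ((((bspline p (((((k : ℤ) - (M : ℤ) : ℤ)) : ℝ) / 2)) : ℝ) : ℂ) / 2)
      = SA N p n / 2 := by
    rw [SA, Finset.sum_div]
    refine (Finset.sum_of_injOn (fun j => (2 * j + (M : ℤ)).toNat) ?_ ?_ ?_ ?_).symm
    · intro x hx y hy hxy
      simp only [Finset.coe_Icc, Set.mem_Icc] at hx hy
      simp only at hxy
      omega
    · intro j hj
      simp only [Finset.coe_Icc, Set.mem_Icc] at hj
      simp only [Finset.coe_filter, Set.mem_setOf_eq, Finset.mem_range]
      omega
    · intro k hk hkim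
      simp only [Finset.mem_filter, Finset.mem_range] at hk
      obtain ⟨hkN, hkpar⟩ := hk
      obtain ⟨j₀, hj₀⟩ : ∃ j : ℤ, (k : ℤ) - (M : ℤ) = 2 * j := ⟨((k : ℤ) - (M : ℤ)) / 2, by omega⟩
      have hout : ¬ (-(((p - 1) / 2 : ℕ) : ℤ) ≤ j₀ ∧ j₀ ≤ (((p - 1) / 2 : ℕ) : ℤ)) := by
        rintro ⟨h1, h2⟩
        exact hkim ⟨j₀, Finset.mem_coe.mpr (Finset.mem_Icc.mpr ⟨h1, h2⟩),
          by show (2 * j₀ + (M : ℤ)).toNat = k; omega⟩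
      have habs : (((p - 1) / 2 : ℕ) : ℤ) + 1 ≤ |j₀| := by
        rcases not_and_or.mp hout with h | h
        · push_neg at h
          rw [abs_of_nonpos (by omega)]
          omega
        · push_neg at h
          rw [abs_of_nonneg (by omega)]
          omega
      have hb : bspline p (((((k : ℤ) - (M : ℤ) : ℤ)) : ℝ) / 2) = 0 := by
        have harg : (((((k : ℤ) - (M : ℤ) : ℤ)) : ℝ) / 2) = ((j₀ : ℤ) : ℝ) := by
          rw [hj₀]
          push_cast
          ring
        rw [harg]
        apply bspline_zero_of_abs p hp
        have hfin : (p : ℤ) ≤ 2 * |j₀| := by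
          have h3 : (p : ℤ) ≤ 2 * ((((p - 1) / 2 : ℕ) : ℤ) + 1) := by omega
          linarith
        have hfinR : (p : ℝ) ≤ 2 * ((|j₀| : ℤ) : ℝ) := by exact_mod_cast hfin
        rw [← Int.cast_abs]
        linarith
      rw [hb]
      simp
    · intro j hj
      simp only [Finset.mem_Icc] at hj
      have hjM : (((2 * j + (M : ℤ)).toNat : ℕ) : ℤ) = 2 * j + (M : ℤ) :=
        Int.toNat_of_nonneg (by omega)
      have hsub : ((((2 * j + (M : ℤ)).toNat : ℕ) : ℤ) - (M : ℤ)) = 2 * j := by omega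
      rw [hsub]
      have harg : (((2 * j : ℤ)) : ℝ) / 2 = (j : ℝ) := by push_cast; ring
      rw [harg, show -(2 * j * n) = -(2 * j * n) from rfl]
      ring
  have hSB : ∑ k ∈ (range N).filter (fun k => ¬ (k + M) % 2 = 0),
      ww N ^ (-(((k : ℤ) - (M : ℤ)) * n)) *
        ((((bspline p (((((k : ℤ) - (M : ℤ) : ℤ)) : ℝ) / 2)) : ℝ) : ℂ) / 2)
      = SB N p n / 2 := by
    rw [SB, Finset.sum_div]
    refine (Finset.sum_of_injOn (fun j => (2 * j + 1 + (M : ℤ)).toNat) ?_ ?_ ?_ ?_).symm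
    · intro x hx y hy hxy
      simp only [Finset.coe_Icc, Set.mem_Icc] at hx hy
      simp only at hxy
      omega
    · intro j hj
      simp only [Finset.coe_Icc, Set.mem_Icc] at hj
      simp only [Finset.coe_filter, Set.mem_setOf_eq, Finset.mem_range]
      omega
    · intro k hk hkim
      simp only [Finset.mem_filter, Finset.mem_range] at hk
      obtain ⟨hkN, hkpar⟩ := hk
      obtain ⟨j₀, hj₀⟩ : ∃ j : ℤ, (k : ℤ) - (M : ℤ) = 2 * j + 1 :=
        ⟨((k : ℤ) - (M : ℤ) - 1) / 2, by omega⟩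
      have hout : ¬ (-((p / 2 : ℕ) : ℤ) ≤ j₀ ∧ j₀ ≤ ((p / 2 : ℕ) : ℤ) - 1) := by
        rintro ⟨h1, h2⟩
        exact hkim ⟨j₀, Finset.mem_coe.mpr (Finset.mem_Icc.mpr ⟨h1, h2⟩),
          by show (2 * j₀ + 1 + (M : ℤ)).toNat = k; omega⟩
      have hb : bspline p (((((k : ℤ) - (M : ℤ) : ℤ)) : ℝ) / 2) = 0 := by
        have harg : (((((k : ℤ) - (M : ℤ) : ℤ)) : ℝ) / 2) = ((j₀ : ℤ) : ℝ) + 1 / 2 := by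
          rw [hj₀]
          push_cast
          ring
        rw [harg]
        apply bspline_zero_of_abs p hp
        have hr : (p : ℝ) ≤ 2 * ((p / 2 : ℕ) : ℝ) + 1 := by
          have h3 : p ≤ 2 * (p / 2) + 1 := by omega
          exact_mod_cast (by exact_mod_cast h3 : (p : ℝ) ≤ ((2 * (p / 2) + 1 : ℕ) : ℝ))
        rcases not_and_or.mp hout with h | h
        · push_neg at h
          have h6 : j₀ ≤ -((p / 2 : ℕ) : ℤ) - 1 := by omega
          have h5 : ((j₀ : ℤ) : ℝ) ≤ -((p / 2 : ℕ) : ℝ) - 1 := by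
            have h7 : ((j₀ : ℤ) : ℝ) ≤ ((-((p / 2 : ℕ) : ℤ) - 1 : ℤ) : ℝ) := Int.cast_le.mpr h6
            simp only [Int.cast_sub, Int.cast_neg, Int.cast_one, Int.cast_natCast] at h7
            linarith
          refine le_abs.mpr (Or.inr ?_)
          linarith
        · push_neg at h
          have h6 : ((p / 2 : ℕ) : ℤ) ≤ j₀ := by omega
          have h5 : ((p / 2 : ℕ) : ℝ) ≤ ((j₀ : ℤ) : ℝ) := by
            have h7 : ((((p / 2 : ℕ) : ℤ) : ℤ) : ℝ) ≤ ((j₀ : ℤ) : ℝ) := Int.cast_le.mpr h6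
            simp only [Int.cast_natCast] at h7
            linarith
          refine le_abs.mpr (Or.inl ?_)
          linarith
      rw [hb]
      simp
    · intro j hj
      simp only [Finset.mem_Icc] at hj
      have hjM : (((2 * j + 1 + (M : ℤ)).toNat : ℕ) : ℤ) = 2 * j + 1 + (M : ℤ) :=
        Int.toNat_of_nonneg (by omega)
      have hsub : ((((2 * j + 1 + (M : ℤ)).toNat : ℕ) : ℤ) - (M : ℤ)) = 2 * j + 1 := by omega
      rw [hsub]
      have harg : (((2 * j + 1 : ℤ)) : ℝ) / 2 = (j : ℝ) + 1 / 2 := by push_cast; ring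
      rw [harg]
      ring
  rw [hSA, hSB]
  ring
lemma ww_pow_N (N : ℕ) (hN : 0 < N) : ww N ^ ((N : ℕ) : ℤ) = 1 :=
  (ww_zpow_eq_one_iff N hN N).mpr ⟨1, by ring⟩

lemma ww_M (N M : ℕ) (hNM : N = 2 * M) (hM : 0 < M) : ww N ^ ((M : ℕ) : ℤ) = -1 := by
  have hNC : (N : ℂ) = 2 * (M : ℂ) := by exact_mod_cast hNM
  have hMC : (M : ℂ) ≠ 0 := Nat.cast_ne_zero.mpr hM.ne'
  have harg : 2 * (Real.pi : ℂ) * Complex.I * (((M : ℕ) : ℤ) : ℂ) / (N : ℂ)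
      = (Real.pi : ℂ) * Complex.I := by
    rw [hNC]
    push_cast
    field_simp
  rw [ww_zpow, harg, Complex.exp_pi_mul_I]

lemma ww_sq (N M : ℕ) (hNM : N = 2 * M) (hM : 0 < M) : ww N ^ (2 : ℤ) = ww M := by
  have hNC : (N : ℂ) = 2 * (M : ℂ) := by exact_mod_cast hNM
  have hMC : (M : ℂ) ≠ 0 := Nat.cast_ne_zero.mpr hM.ne'
  rw [ww_zpow, ww]
  congr 1
  rw [hNC]
  push_cast
  field_simp

open Finset in
lemma conj_SA (N p : ℕ) (hp : 2 ≤ p) (n : ℤ) :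
    (starRingEnd ℂ) (SA N p n) = SA N p n := by
  rw [SA, map_sum]
  have h1 : ∀ j ∈ Finset.Icc (-(((p - 1) / 2 : ℕ) : ℤ)) (((p - 1) / 2 : ℕ) : ℤ),
      (starRingEnd ℂ) (ww N ^ (-(2 * j * n)) * ((bspline p (j : ℝ) : ℝ) : ℂ))
      = ww N ^ (2 * j * n) * ((bspline p (j : ℝ) : ℝ) : ℂ) := by
    intro j _
    rw [map_mul, conj_ww_zpow, Complex.conj_ofReal, neg_neg]
  rw [Finset.sum_congr rfl h1]
  refine Finset.sum_nbij' (fun j => -j) (fun j => -j) ?_ ?_ ?_ ?_ ?_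
  · intro a ha
    simp only [Finset.mem_Icc] at ha ⊢
    omega
  · intro a ha
    simp only [Finset.mem_Icc] at ha ⊢
    omega
  · intro a _; ring
  · intro a _; ring
  · intro j _
    have hb : bspline p ((-j : ℤ) : ℝ) = bspline p ((j : ℤ) : ℝ) := by
      push_cast
      exact bspline_symm p hp (j : ℝ)
    rw [hb]
    congr 1
    rw [show (-(2 * -j * n)) = 2 * j * n by ring]

open Finset in
lemma conj_SB (N p : ℕ) (hp : 2 ≤ p) (n : ℤ) :
    (starRingEnd ℂ) (SB N p n) = SB N p n := by
  rw [SB, map_sum]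
  have h1 : ∀ j ∈ Finset.Icc (-((p / 2 : ℕ) : ℤ)) ((((p / 2 : ℕ) : ℤ)) - 1),
      (starRingEnd ℂ) (ww N ^ (-((2 * j + 1) * n)) * ((bspline p ((j : ℝ) + 1 / 2) : ℝ) : ℂ))
      = ww N ^ ((2 * j + 1) * n) * ((bspline p ((j : ℝ) + 1 / 2) : ℝ) : ℂ) := by
    intro j _
    rw [map_mul, conj_ww_zpow, Complex.conj_ofReal, neg_neg]
  rw [Finset.sum_congr rfl h1]
  refine Finset.sum_nbij' (fun j => -1 - j) (fun j => -1 - j) ?_ ?_ ?_ ?_ ?_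
  · intro a ha
    simp only [Finset.mem_Icc] at ha ⊢
    omega
  · intro a ha
    simp only [Finset.mem_Icc] at ha ⊢
    omega
  · intro a _; ring
  · intro a _; ring
  · intro j _
    have hb : bspline p (((-1 - j : ℤ) : ℝ) + 1 / 2) = bspline p ((j : ℝ) + 1 / 2) := by
      rw [show (((-1 - j : ℤ) : ℝ) + 1 / 2) = -((j : ℝ) + 1 / 2) by push_cast; ring]
      exact bspline_symm p hp ((j : ℝ) + 1 / 2)
    rw [hb]
    congr 1
    rw [show (-((2 * (-1 - j) + 1) * n)) = (2 * j + 1) * n by ring]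

open Finset in
lemma SA_shift (N p M : ℕ) (hNM : N = 2 * M) (hM : 0 < M) (n : ℤ) :
    SA N p (n + (M : ℤ)) = SA N p n := by
  have hNZ : (N : ℤ) = 2 * (M : ℤ) := by exact_mod_cast hNM
  have hN : 0 < N := by omega
  rw [SA, SA]
  refine Finset.sum_congr rfl fun j _ => ?_
  congr 1
  have hE : -(2 * j * (n + (M : ℤ))) = -(2 * j * n) + (N : ℤ) * (-j) := by rw [hNZ]; ring
  rw [hE, ww_zpow_add, zpow_mul, ww_pow_N N hN, one_zpow, mul_one]

open Finset in
lemma SB_shift (N p M : ℕ) (hNM : N = 2 * M) (hM : 0 < M) (n : ℤ) :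
    SB N p (n + (M : ℤ)) = -SB N p n := by
  have hNZ : (N : ℤ) = 2 * (M : ℤ) := by exact_mod_cast hNM
  have hN : 0 < N := by omega
  rw [SB, SB, ← Finset.sum_neg_distrib]
  refine Finset.sum_congr rfl fun j _ => ?_
  have hE : -((2 * j + 1) * (n + (M : ℤ)))
      = -((2 * j + 1) * n) + ((N : ℤ) * (-j) + -((M : ℕ) : ℤ)) := by rw [hNZ]; ring
  have hmm' : ww N ^ (-((M : ℕ) : ℤ)) = -1 := by
    rw [zpow_neg, ww_M N M hNM hM]
    norm_num
  rw [hE, ww_zpow_add, ww_zpow_add, zpow_mul, ww_pow_N N hN, one_zpow, one_mul, hmm']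
  ring

open Finset in
open scoped ComplexOrder in
lemma beta_props (N p M : ℕ) (hNM : N = 2 * M) (hp : 2 ≤ p) (hpM : p ≤ M)
    (hpos : ∀ n : ℤ, 0 < uSeq N p (2 * n) ^ 2 + vSeq N p (2 * n) ^ 2) :
    (∀ n : ℤ, (starRingEnd ℂ) (betaS N p n) = betaS N p n) ∧
    (∀ n : ℤ, betaS N p n ^ 2 + betaS N p (n + (M : ℤ)) ^ 2 = 2) ∧
    (∀ n : ℤ, betaS N p (n + (M : ℤ) + (M : ℤ)) = betaS N p n) := by
  have hM : 0 < M := by omega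
  have hN : 0 < N := by omega
  -- real positive representation of the quadratic sum
  have hz : ∀ n : ℤ, ∃ x : ℝ, 0 < x ∧
      SA N p n ^ 2 + SB N p n ^ 2 = ((x : ℝ) : ℂ) := by
    intro n
    have h0 := hpos n
    rw [Complex.lt_def] at h0
    obtain ⟨hre, him⟩ := h0
    refine ⟨(uSeq N p (2 * n) ^ 2 + vSeq N p (2 * n) ^ 2).re, by simpa using hre, ?_⟩
    rw [← uSeq_eq_SA N p M hNM hp hpM n, ← vSeq_eq_SB N p M hNM hp hpM n]
    apply Complex.ext
    · simp
    · simp [← him]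
  -- Υ and its square root
  have hup : ∀ n : ℤ, ∃ y : ℝ, 0 < y ∧ upsilon N p n ^ ((1 : ℂ) / 2) = ((y : ℝ) : ℂ) ∧
      ((y : ℝ) : ℂ) ^ 2 = upsilon N p n ∧
      upsilon N p n = (SA N p n ^ 2 + SB N p n ^ 2) / 4 := by
    intro n
    obtain ⟨x, hx, hxe⟩ := hz n
    have hU : upsilon N p n = ((x / 4 : ℝ) : ℂ) := by
      rw [upsilon, uSeq_eq_SA N p M hNM hp hpM n, vSeq_eq_SB N p M hNM hp hpM n, hxe]
      push_cast
      ring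
    refine ⟨(x / 4) ^ ((1 : ℝ) / 2), Real.rpow_pos_of_pos (by linarith) _, ?_, ?_, ?_⟩
    · rw [hU, show ((1 : ℂ) / 2) = (((1 : ℝ) / 2 : ℝ) : ℂ) by norm_num,
        ← Complex.ofReal_cpow (by linarith)]
    · have hy2 : ((x / 4) ^ ((1 : ℝ) / 2)) ^ 2 = x / 4 := by
        rw [← Real.rpow_natCast ((x / 4) ^ ((1 : ℝ) / 2)) 2, ← Real.rpow_mul (by linarith)]
        norm_num
      rw [hU, ← Complex.ofReal_pow, hy2]
    · rw [hU, hxe]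
      push_cast
      ring
  -- shifts
  have hbh : ∀ n : ℤ, bhat1 N p n = (SA N p n + SB N p n) / 2 :=
    fun n => bhat1_eq_SASB N p M hNM hp hpM n
  have hbh2 : ∀ n : ℤ, bhat1 N p (n + (M : ℤ)) = (SA N p n - SB N p n) / 2 := by
    intro n
    rw [hbh (n + (M : ℤ)), SA_shift N p M hNM hM n, SB_shift N p M hNM hM n]
    ring
  have hupshift : ∀ n : ℤ, upsilon N p (n + (M : ℤ)) = upsilon N p n := by
    intro n
    obtain ⟨y, hy, hye, hysq, hU⟩ := hup n
    obtain ⟨y', hy', hye', hysq', hU'⟩ := hup (n + (M : ℤ))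
    rw [hU', hU, SA_shift N p M hNM hM n, SB_shift N p M hNM hM n]
    ring
  have hconj : ∀ n : ℤ, (starRingEnd ℂ) (betaS N p n) = betaS N p n := by
    intro n
    obtain ⟨y, hy, hye, hysq, hU⟩ := hup n
    rw [betaS, map_div₀, hye, Complex.conj_ofReal, hbh n, map_div₀, map_add,
      conj_SA N p hp n, conj_SB N p hp n, map_ofNat]
  refine ⟨hconj, ?_, ?_⟩
  · intro n
    obtain ⟨y, hy, hye, hysq, hU⟩ := hup n
    have hYne : ((y : ℝ) : ℂ) ≠ 0 := by
      simpa using Complex.ofReal_ne_zero.mpr hy.ne'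
    have hUVne : SA N p n ^ 2 + SB N p n ^ 2 ≠ 0 := by
      obtain ⟨x, hx, hxe⟩ := hz n
      rw [hxe]
      simpa using Complex.ofReal_ne_zero.mpr hx.ne'
    have hb0 : betaS N p n = (SA N p n + SB N p n) / 2 / ((y : ℝ) : ℂ) := by
      rw [betaS, hbh n, hye]
    have hb1 : betaS N p (n + (M : ℤ)) = (SA N p n - SB N p n) / 2 / ((y : ℝ) : ℂ) := by
      rw [betaS, hbh2 n, hupshift n, hye]
    rw [hb0, hb1]
    have hY2 : ((y : ℝ) : ℂ) ^ 2 = (SA N p n ^ 2 + SB N p n ^ 2) / 4 := by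
      rw [hysq, hU]
    have hcalc : ((SA N p n + SB N p n) / 2 / ((y : ℝ) : ℂ)) ^ 2
          + ((SA N p n - SB N p n) / 2 / ((y : ℝ) : ℂ)) ^ 2
        = (SA N p n ^ 2 + SB N p n ^ 2) / 2 / (((y : ℝ) : ℂ)) ^ 2 := by
      ring
    rw [hcalc, hY2]
    rw [div_div_eq_mul_div, div_mul_eq_mul_div, mul_comm]
    rw [mul_div_assoc]
    rw [show (4 : ℂ) * ((SA N p n ^ 2 + SB N p n ^ 2) / 2) / (SA N p n ^ 2 + SB N p n ^ 2)
        = 2 * ((SA N p n ^ 2 + SB N p n ^ 2) / (SA N p n ^ 2 + SB N p n ^ 2)) from by ring,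
      div_self hUVne, mul_one]
  · intro n
    have hSA2 : SA N p (n + (M : ℤ) + (M : ℤ)) = SA N p n := by
      rw [SA_shift N p M hNM hM, SA_shift N p M hNM hM]
    have hSB2 : SB N p (n + (M : ℤ) + (M : ℤ)) = SB N p n := by
      rw [SB_shift N p M hNM hM, SB_shift N p M hNM hM, neg_neg]
    rw [betaS, betaS, hbh (n + (M : ℤ) + (M : ℤ)), hbh n, hSA2, hSB2,
      hupshift (n + (M : ℤ)), hupshift n]

open scoped ComplexOrder

/-- The 2-sample shifts of the first-level wavelet packets ψ_{[1],0}^p and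
    ψ_{[1],1}^p form an orthonormal basis of Π[N]. -/
theorem psi1_shifts_orthonormal_basis (N p : ℕ) (hN : 0 < N) (hNe : Even N)
    (hp : 2 ≤ p) (hpN : p ≤ N / 2)
    (hpos : ∀ n : ℤ, 0 < uSeq N p (2 * n) ^ 2 + vSeq N p (2 * n) ^ 2) :
    ∀ lam mu : ℕ, lam < 2 → mu < 2 → ∀ l m : ℕ, l < N / 2 → m < N / 2 →
      inner1 N (fun k => psi1 N p lam (k - 2 * (l : ℤ)))
          (fun k => psi1 N p mu (k - 2 * (m : ℤ)))
        = if lam = mu ∧ l = m then 1 else 0 := by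
  intro lam mu hlam hmu l m hl hm
  have hNM : N = 2 * (N / 2) := by
    obtain ⟨t, ht⟩ := hNe
    omega
  set M : ℕ := N / 2 with hMdef
  have hM : 0 < M := by omega
  have hpM : p ≤ M := hpN
  have hNZ : (N : ℤ) = 2 * (M : ℤ) := by exact_mod_cast hNM
  have hN2 : (N : ℤ) / 2 = (M : ℤ) := by omega
  have hNC : (N : ℂ) ≠ 0 := Nat.cast_ne_zero.mpr hN.ne'
  obtain ⟨hconj, hsq, hper⟩ := beta_props N p M hNM hp hpM hpos
  have hwM : ww N ^ ((M : ℕ) : ℤ) = -1 := ww_M N M hNM hM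
  have hinv : ∀ z : ℤ, ww N ^ z * ww N ^ (-z) = 1 := by
    intro z
    have h0 : z + -z = 0 := by omega
    rw [← ww_zpow_add, h0, zpow_zero]
  -- rewrite via the Parseval-type lemma
  have h1 := inner_inv N hN (fun n => if lam = 0 then betaS N p n else alphaS N p n)
      (fun n => if mu = 0 then betaS N p n else alphaS N p n) (2 * (l : ℤ)) (2 * (m : ℤ))
  have hfun1 : (fun k : ℤ => psi1 N p lam (k - 2 * (l : ℤ)))
      = fun k : ℤ => (N : ℂ)⁻¹ * ∑ n ∈ Finset.range N,
          (if lam = 0 then betaS N p (n : ℤ) else alphaS N p (n : ℤ))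
            * ww N ^ ((k - 2 * (l : ℤ)) * (n : ℤ)) := by
    funext k
    rw [psi1]
  have hfun2 : (fun k : ℤ => psi1 N p mu (k - 2 * (m : ℤ)))
      = fun k : ℤ => (N : ℂ)⁻¹ * ∑ n ∈ Finset.range N,
          (if mu = 0 then betaS N p (n : ℤ) else alphaS N p (n : ℤ))
            * ww N ^ ((k - 2 * (m : ℤ)) * (n : ℤ)) := by
    funext k
    rw [psi1]
  rw [hfun1, hfun2, h1]
  -- key pairing identity
  have hkey : ∀ n : ℤ,
      (if lam = 0 then betaS N p n else alphaS N p n)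
          * (starRingEnd ℂ) (if mu = 0 then betaS N p n else alphaS N p n)
        + (if lam = 0 then betaS N p (n + (M : ℤ)) else alphaS N p (n + (M : ℤ)))
          * (starRingEnd ℂ)
              (if mu = 0 then betaS N p (n + (M : ℤ)) else alphaS N p (n + (M : ℤ)))
      = if lam = mu then 2 else 0 := by
    intro n
    have halpha : ∀ t : ℤ, alphaS N p t = ww N ^ t * betaS N p (t + (M : ℤ)) := by
      intro t
      rw [alphaS, hN2]
    have hneg : ww N ^ (-(n + (M : ℤ))) = -(ww N ^ (-n)) := by
      rw [show -(n + (M : ℤ)) = -n + -((M : ℕ) : ℤ) by ring, ww_zpow_add]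
      rw [show ww N ^ (-((M : ℕ) : ℤ)) = (-1 : ℂ) from by rw [zpow_neg, hwM]; norm_num]
      ring
    have hneg2 : ww N ^ (n + (M : ℤ)) = -(ww N ^ n) := by
      rw [ww_zpow_add, hwM]
      ring
    have hlam2 : lam = 0 ∨ lam = 1 := by omega
    have hmu2 : mu = 0 ∨ mu = 1 := by omega
    rcases hlam2 with h0 | h1' <;> rcases hmu2 with g0 | g1 <;> subst_vars
    · simp only [if_true, if_false, Nat.zero_ne_one, Nat.one_ne_zero, reduceIte]
      rw [hconj n, hconj (n + (M : ℤ)), ← pow_two, ← pow_two]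
      exact hsq n
    · simp only [if_true, if_false, Nat.zero_ne_one, Nat.one_ne_zero, reduceIte]
      rw [halpha n, halpha (n + (M : ℤ)), hper n, map_mul, map_mul, conj_ww_zpow,
        conj_ww_zpow, hconj (n + (M : ℤ)), hconj n]
      linear_combination (betaS N p n * betaS N p (n + (M : ℤ))) * hneg
    · simp only [if_true, if_false, Nat.zero_ne_one, Nat.one_ne_zero, reduceIte]
      rw [halpha n, halpha (n + (M : ℤ)), hper n, hconj n, hconj (n + (M : ℤ))]
      linear_combination (betaS N p n * betaS N p (n + (M : ℤ))) * hneg2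
    · simp only [if_true, if_false, Nat.zero_ne_one, Nat.one_ne_zero, reduceIte]
      rw [halpha n, halpha (n + (M : ℤ)), hper n, map_mul, map_mul, conj_ww_zpow,
        conj_ww_zpow, hconj (n + (M : ℤ)), hconj n]
      linear_combination (betaS N p (n + (M : ℤ)))^2 * hinv n
        + (betaS N p n)^2 * hinv (n + (M : ℤ)) + hsq n
  -- split the sum over range N = range (M + M)
  have hMM : Finset.range N = Finset.range (M + M) := by rw [hNM, two_mul]
  rw [hMM, Finset.sum_range_add, ← Finset.sum_add_distrib]
  have hpair : ∀ i ∈ Finset.range M,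
      ((if lam = 0 then betaS N p (i : ℤ) else alphaS N p (i : ℤ))
          * (starRingEnd ℂ) (if mu = 0 then betaS N p (i : ℤ) else alphaS N p (i : ℤ))
          * ww N ^ ((2 * (m : ℤ) - 2 * (l : ℤ)) * (i : ℤ))
        + (if lam = 0 then betaS N p ((M + i : ℕ) : ℤ) else alphaS N p ((M + i : ℕ) : ℤ))
          * (starRingEnd ℂ)
              (if mu = 0 then betaS N p ((M + i : ℕ) : ℤ) else alphaS N p ((M + i : ℕ) : ℤ))
          * ww N ^ ((2 * (m : ℤ) - 2 * (l : ℤ)) * ((M + i : ℕ) : ℤ)))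
      = (if lam = mu then 2 else 0) * ww N ^ ((2 * (m : ℤ) - 2 * (l : ℤ)) * (i : ℤ)) := by
    intro i _
    have hcast : ((M + i : ℕ) : ℤ) = (i : ℤ) + (M : ℤ) := by push_cast; ring
    rw [hcast]
    have hww : ww N ^ ((2 * (m : ℤ) - 2 * (l : ℤ)) * ((i : ℤ) + (M : ℤ)))
        = ww N ^ ((2 * (m : ℤ) - 2 * (l : ℤ)) * (i : ℤ)) := by
      rw [show (2 * (m : ℤ) - 2 * (l : ℤ)) * ((i : ℤ) + (M : ℤ))
          = (2 * (m : ℤ) - 2 * (l : ℤ)) * (i : ℤ) + (N : ℤ) * ((m : ℤ) - (l : ℤ)) by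
            rw [hNZ]; ring,
        ww_zpow_add, zpow_mul (ww N) ((N : ℕ) : ℤ) ((m : ℤ) - (l : ℤ)), ww_pow_N N hN,
        one_zpow, mul_one]
    rw [hww]
    linear_combination (ww N ^ ((2 * (m : ℤ) - 2 * (l : ℤ)) * (i : ℤ))) * hkey (i : ℤ)
  rw [Finset.sum_congr rfl hpair, ← Finset.mul_sum]
  -- geometric sum
  have hgeo : ∑ i ∈ Finset.range M, ww N ^ ((2 * (m : ℤ) - 2 * (l : ℤ)) * (i : ℤ))
      = if l = m then (M : ℂ) else 0 := by
    have hterm : ∀ i ∈ Finset.range M,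
        ww N ^ ((2 * (m : ℤ) - 2 * (l : ℤ)) * (i : ℤ))
        = ww M ^ ((i : ℤ) * ((m : ℤ) - (l : ℤ))) := by
      intro i _
      rw [show (2 * (m : ℤ) - 2 * (l : ℤ)) * (i : ℤ)
          = (2 : ℤ) * ((i : ℤ) * ((m : ℤ) - (l : ℤ))) by ring,
        zpow_mul, ww_sq N M hNM hM]
    rw [Finset.sum_congr rfl hterm, sum_ww M hM ((m : ℤ) - (l : ℤ))]
    by_cases h : l = m
    · subst h
      simp
    · rw [if_neg h, if_neg]
      rintro ⟨e, he⟩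
      have h1 : (m : ℤ) - (l : ℤ) = 0 := by
        have he0 : e = 0 := by
          rcases lt_trichotomy e 0 with hc' | hc' | hc'
          · nlinarith [he ▸ (by omega : -(M : ℤ) < (m : ℤ) - (l : ℤ))]
          · exact hc'
          · nlinarith [he ▸ (by omega : (m : ℤ) - (l : ℤ) < (M : ℤ))]
        rw [he, he0, mul_zero]
      exact h (by omega)
  rw [hgeo]
  by_cases hlm : lam = mu
  · by_cases hl2 : l = m
    · rw [if_pos hlm, if_pos hl2, if_pos ⟨hlm, hl2⟩]
      rw [show (2 : ℂ) * (M : ℂ) = (N : ℂ) by exact_mod_cast hNM.symm,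
        inv_mul_cancel₀ hNC]
    · rw [if_pos hlm, if_neg hl2, mul_zero, mul_zero, if_neg (by tauto)]
  · rw [if_neg hlm, zero_mul, mul_zero, if_neg (by tauto)]


end WP
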